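/- The generating function for restricted m-ary partitions satisfies Σ_{n≥0} c_m(n) q^n = 1 + Σ_{n≥0} q^{1+m+⋯+m^n} / ((1-q)(1-q^m)⋯(1-q^{m^n})), as formal power series in q. -/

import Mathlib

/-- The number of restricted `m`-ary partitions of `n`: partitions of `n` into
powers of `m` such that whenever `m ^ i` is a part, all of `m ^ 0, …, m ^ (i-1)`
are also parts. -/
noncomputable def restrictedMaryCount (m n : ℕ) : ℕ :=
  Nat.card {P : Nat.Partition n //
    (∀ x ∈ P.parts, ∃ i, x = m ^ i) ∧
    ∀ i, m ^ i ∈ P.parts → ∀ j < i, m ^ j ∈ P.parts}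


open Finset PowerSeries

lemma inv_one_sub_X_pow (a : ℕ) (ha : 0 < a) :
    (1 - (X : PowerSeries ℚ) ^ a)⁻¹ = PowerSeries.mk fun k => if a ∣ k then 1 else 0 := by
  rw [PowerSeries.inv_eq_iff_mul_eq_one]
  · ext N
    rw [mul_sub, mul_one, map_sub, PowerSeries.coeff_mul_X_pow']
    simp only [coeff_mk, coeff_one]
    rcases eq_or_ne N 0 with rfl | hN
    · simp [(by omega : ¬ a ≤ 0), ha.ne']
    · rw [if_neg hN]
      by_cases hle : a ≤ N
      · rw [if_pos hle]
        have hiff : a ∣ N ↔ a ∣ N - a :=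
          ⟨fun h => Nat.dvd_sub h dvd_rfl,
           fun h => by have := Nat.dvd_add h (dvd_refl a); rwa [Nat.sub_add_cancel hle] at this⟩
        simp [← hiff]
      · rw [if_neg hle, sub_zero, if_neg]
        intro hd
        exact hle (Nat.le_of_dvd (Nat.pos_of_ne_zero hN) hd)
  · simp [ha.ne']

lemma coeff_summand (m : ℕ) (hm : 2 ≤ m) (N n : ℕ) :
    (coeff (R := ℚ) N) ((X : PowerSeries ℚ) ^ (∑ i ∈ Finset.range (n + 1), m ^ i) *
        ∏ i ∈ Finset.range (n + 1), (1 - (X : PowerSeries ℚ) ^ (m ^ i))⁻¹) =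
      if (∑ i ∈ Finset.range (n + 1), m ^ i) ≤ N then
        (((Finset.range (n+1)).finsuppAntidiag (N - ∑ i ∈ Finset.range (n + 1), m ^ i)).filter
          fun l => ∀ i ∈ Finset.range (n+1), m ^ i ∣ l i).card
      else 0 := by
  rw [PowerSeries.coeff_X_pow_mul']
  split_ifs with h
  · rw [PowerSeries.coeff_prod]
    have : ∀ i ∈ Finset.range (n+1), (1 - (X : PowerSeries ℚ) ^ (m ^ i))⁻¹ =
        PowerSeries.mk fun k => if m ^ i ∣ k then 1 else 0 := fun i _ =>
      inv_one_sub_X_pow _ (pow_pos (by omega) i)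
    rw [Finset.sum_congr rfl fun l hl => Finset.prod_congr rfl fun i hi => by
      rw [this i hi, coeff_mk]]
    simp_rw [Finset.prod_boole]
    rw [Finset.sum_boole]
  · rfl

open Finset

variable {m : ℕ}

/-- multiset of parts from a multiplicity finsupp -/
def partsOf (m : ℕ) (f : ℕ →₀ ℕ) : Multiset ℕ :=
  ∑ i ∈ f.support, Multiset.replicate (f i) (m ^ i)

lemma count_partsOf (hm : 2 ≤ m) (f : ℕ →₀ ℕ) (j : ℕ) :
    (partsOf m f).count (m ^ j) = f j := by
  rw [partsOf, Multiset.count_sum']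
  have : ∀ i ∈ f.support, (Multiset.replicate (f i) (m ^ i)).count (m ^ j)
      = if i = j then f i else 0 := by
    intro i _
    rw [Multiset.count_replicate]
    congr 1
    simp only [eq_iff_iff]
    exact ⟨fun h => Nat.pow_right_injective hm h, fun h => by rw [h]⟩
  rw [Finset.sum_congr rfl this, Finset.sum_ite_eq' f.support j f]
  split_ifs with h
  · rfl
  · exact (Finsupp.notMem_support_iff.mp h).symm

lemma mem_partsOf {f : ℕ →₀ ℕ} {x : ℕ} :
    x ∈ partsOf m f ↔ ∃ i, f i ≠ 0 ∧ x = m ^ i := by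
  simp only [partsOf, Multiset.mem_sum, Finsupp.mem_support_iff, Multiset.eq_of_mem_replicate]
  constructor
  · rintro ⟨i, hi, hx⟩
    exact ⟨i, hi, Multiset.eq_of_mem_replicate hx⟩
  · rintro ⟨i, hi, rfl⟩
    exact ⟨i, hi, Multiset.mem_replicate.2 ⟨hi, rfl⟩⟩

lemma sum_partsOf (f : ℕ →₀ ℕ) : (partsOf m f).sum = f.sum fun i k => m ^ i * k := by
  rw [partsOf, Finsupp.sum,
    show (∑ i ∈ f.support, Multiset.replicate (f i) (m ^ i)).sum
      = Multiset.sumAddMonoidHom (∑ i ∈ f.support, Multiset.replicate (f i) (m ^ i)) from rfl,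
    map_sum Multiset.sumAddMonoidHom _ f.support]
  refine Finset.sum_congr rfl fun i _ => ?_
  show (Multiset.replicate (f i) (m ^ i)).sum = m ^ i * f i
  rw [Multiset.sum_replicate, smul_eq_mul, mul_comm]


lemma partsOf_mem_iff (hm : 2 ≤ m) {f : ℕ →₀ ℕ} {i : ℕ} :
    m ^ i ∈ partsOf m f ↔ f i ≠ 0 := by
  rw [← Multiset.count_pos, count_partsOf hm, Nat.pos_iff_ne_zero]

lemma card_eq_card_finsupp (hm : 2 ≤ m) (N : ℕ) :
    restrictedMaryCount m N =
      Nat.card {f : ℕ →₀ ℕ // (f.sum fun i k => m ^ i * k) = N ∧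
        ∀ i, f i ≠ 0 → ∀ j < i, f j ≠ 0} := by
  rw [restrictedMaryCount]
  have hpos : ∀ f : ℕ →₀ ℕ, ∀ i, i ∈ partsOf m f → 0 < i := by
    intro f i hi
    obtain ⟨k, -, rfl⟩ := mem_partsOf.mp hi
    exact pow_pos (by omega) k
  have hpow : ∀ f : ℕ →₀ ℕ, ∀ y ∈ partsOf m f, ∃ k, y = m ^ k := by
    intro f y hy
    obtain ⟨k, -, rfl⟩ := mem_partsOf.mp hy
    exact ⟨k, rfl⟩
  refine (Nat.card_congr (Equiv.ofBijective (fun x =>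
    ⟨⟨partsOf m x.1, fun {i} hi => hpos x.1 i hi, by rw [sum_partsOf, x.2.1]⟩,
      hpow x.1,
      fun i hi j hj => (partsOf_mem_iff hm).mpr
        (x.2.2 i ((partsOf_mem_iff hm).mp hi) j hj)⟩)
    ⟨?_, ?_⟩)).symm
  · rintro ⟨f, hf⟩ ⟨g, hg⟩ h
    simp only [Subtype.mk.injEq, Nat.Partition.mk.injEq] at h
    exact Subtype.ext (Finsupp.ext fun j => by
      rw [← count_partsOf hm f j, ← count_partsOf hm g j, h])
  · rintro ⟨⟨P, ppos, psum⟩, h1, h2⟩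
    have hdec : ∀ i : ℕ, i ∈ (P.toFinset.image (Nat.log m)).filter
        (fun i => Multiset.count (m ^ i) P ≠ 0) ↔ Multiset.count (m ^ i) P ≠ 0 := by
      intro i
      rw [Finset.mem_filter, and_iff_right_iff_imp]
      intro hc
      have hmem : m ^ i ∈ P := by rwa [← Multiset.count_pos, Nat.pos_iff_ne_zero]
      exact Finset.mem_image.mpr ⟨m ^ i, Multiset.mem_toFinset.mpr hmem,
        Nat.log_pow (by omega) i⟩
    set f : ℕ →₀ ℕ := ⟨(P.toFinset.image (Nat.log m)).filter
        (fun i => Multiset.count (m ^ i) P ≠ 0), fun i => Multiset.count (m ^ i) P, hdec⟩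
      with hfdef
    have key : partsOf m f = P := by
      ext x
      by_cases hx : ∃ j, x = m ^ j
      · obtain ⟨j, rfl⟩ := hx
        rw [count_partsOf hm]
        rfl
      · rw [Multiset.count_eq_zero.mpr, Multiset.count_eq_zero.mpr]
        · intro hxP; exact hx (h1 x hxP)
        · intro hxp
          obtain ⟨k, -, rfl⟩ := mem_partsOf.mp hxp
          exact hx ⟨k, rfl⟩
    refine ⟨⟨f, ?_, ?_⟩, ?_⟩
    · rw [← sum_partsOf, key, psum]
    · intro i hi j hj
      have hmi : m ^ i ∈ P := by
        rw [← Multiset.count_pos, Nat.pos_iff_ne_zero]; exact hi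
      have := h2 i hmi j hj
      show Multiset.count (m ^ j) P ≠ 0
      rwa [← Nat.pos_iff_ne_zero, Multiset.count_pos]
    · exact Subtype.ext (Nat.Partition.ext key)

/-- summand finset -/
def Dfin (m N n : ℕ) : Finset (ℕ →₀ ℕ) :=
  if (∑ i ∈ Finset.range (n+1), m ^ i) ≤ N then
    ((Finset.range (n+1)).finsuppAntidiag (N - ∑ i ∈ Finset.range (n+1), m ^ i)).filter
      fun l => ∀ i ∈ Finset.range (n+1), m ^ i ∣ l i
  else ∅

lemma mem_Dfin {N n : ℕ} {l : ℕ →₀ ℕ} :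
    l ∈ Dfin m N n ↔ (∑ i ∈ Finset.range (n+1), m ^ i) ≤ N ∧
      ((Finset.range (n+1)).sum fun i => l i) = N - ∑ i ∈ Finset.range (n+1), m ^ i ∧
      l.support ⊆ Finset.range (n+1) ∧ ∀ i ∈ Finset.range (n+1), m ^ i ∣ l i := by
  rw [Dfin]
  split_ifs with h
  · rw [Finset.mem_filter, Finset.mem_finsuppAntidiag]
    tauto
  · simp [h]

lemma term_le_wt (f : ℕ →₀ ℕ) (i : ℕ) (hi : f i ≠ 0) :
    m ^ i * f i ≤ f.sum fun i k => m ^ i * k := by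
  rw [Finsupp.sum]
  exact Finset.single_le_sum (f := fun j => m ^ j * f j) (fun _ _ => Nat.zero_le _)
    (Finsupp.mem_support_iff.mpr hi)

/-- multiplicity finsupp from a divisible antidiagonal element -/
def mkF (m n : ℕ) (l : ℕ →₀ ℕ) : ℕ →₀ ℕ :=
  ⟨Finset.range (n+1), fun i => if i < n + 1 then l i / m ^ i + 1 else 0, by
    intro i
    rw [Finset.mem_range]
    split_ifs with h <;> simp [h]⟩

lemma mkF_apply (n : ℕ) (l : ℕ →₀ ℕ) (i : ℕ) :
    mkF m n l i = if i < n + 1 then l i / m ^ i + 1 else 0 := rfl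

lemma mkF_support (n : ℕ) (l : ℕ →₀ ℕ) :
    (mkF m n l).support = Finset.range (n+1) := rfl

noncomputable def mkL (m n : ℕ) (f : ℕ →₀ ℕ) : ℕ →₀ ℕ :=
  Finsupp.onFinset (Finset.range (n+1))
    (fun i => if i < n + 1 then m ^ i * (f i - 1) else 0)
    (by intro i h; rw [Finset.mem_range]; by_contra hc; simp [hc] at h)

lemma mkL_apply (n : ℕ) (f : ℕ →₀ ℕ) (i : ℕ) :
    mkL m n f i = if i < n + 1 then m ^ i * (f i - 1) else 0 := rfl

lemma wt_mkF (hm : 2 ≤ m) {N : ℕ} (n : ℕ) (l : ℕ →₀ ℕ) (hl : l ∈ Dfin m N n) :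
    ((mkF m n l).sum fun i k => m ^ i * k) = N := by
  obtain ⟨hT, hsum, hsupp, hdvd⟩ := mem_Dfin.mp hl
  rw [Finsupp.sum, mkF_support]
  have h : ∀ i ∈ Finset.range (n+1), m ^ i * (mkF m n l i) = l i + m ^ i := by
    intro i hi
    rw [mkF_apply, if_pos (Finset.mem_range.mp hi), Nat.mul_add, Nat.mul_one,
      Nat.mul_div_cancel' (hdvd i hi)]
  rw [Finset.sum_congr rfl h, Finset.sum_add_distrib, hsum]
  omega

lemma down_mkF (n : ℕ) (l : ℕ →₀ ℕ) :
    ∀ i, mkF m n l i ≠ 0 → ∀ j < i, mkF m n l j ≠ 0 := by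
  intro i hi j hj
  by_cases h1 : i < n + 1
  · rw [mkF_apply, if_pos (by omega : j < n + 1)]
    simp
  · rw [mkF_apply, if_neg h1] at hi
    exact absurd rfl hi

set_option maxHeartbeats 1000000 in
lemma card_finsupp (hm : 2 ≤ m) (N : ℕ) (hN : N ≠ 0) :
    Nat.card {f : ℕ →₀ ℕ // (f.sum fun i k => m ^ i * k) = N ∧
        ∀ i, f i ≠ 0 → ∀ j < i, f j ≠ 0} =
      ∑ n ∈ Finset.range (N + 1), (Dfin m N n).card := by
  have hm1 : 1 < m := hm
  have hbij : Function.Bijective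
      (fun x : Σ n : Fin (N+1), {l : ℕ →₀ ℕ // l ∈ Dfin m N n.1} =>
        (⟨mkF m x.1.1 x.2.1, wt_mkF hm x.1.1 x.2.1 x.2.2, down_mkF x.1.1 x.2.1⟩ :
          {f : ℕ →₀ ℕ // (f.sum fun i k => m ^ i * k) = N ∧
            ∀ i, f i ≠ 0 → ∀ j < i, f j ≠ 0})) := by
    constructor
    · rintro ⟨n, l, hl⟩ ⟨n', l', hl'⟩ h
      simp only [Subtype.mk.injEq] at h
      have hsupp : Finset.range ((n:ℕ)+1) = Finset.range ((n':ℕ)+1) := by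
        rw [← mkF_support (m := m) (n:ℕ) l, ← mkF_support (m := m) (n':ℕ) l', h]
      have hnn : (n:ℕ) = (n':ℕ) := by
        have h1' : (n:ℕ) ∈ Finset.range ((n':ℕ)+1) := by
          rw [← hsupp]; exact Finset.self_mem_range_succ _
        have h2' : (n':ℕ) ∈ Finset.range ((n:ℕ)+1) := by
          rw [hsupp]; exact Finset.self_mem_range_succ _
        have h1 := Finset.mem_range.mp h1'
        have h2 := Finset.mem_range.mp h2'
        omega
      have hnn' : n = n' := Fin.ext hnn
      subst hnn'
      refine Sigma.ext rfl (heq_of_eq (Subtype.ext (Finsupp.ext fun i => ?_)))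
      by_cases hi : i < (n:ℕ) + 1
      · have hcf := DFunLike.congr_fun h i
        rw [mkF_apply, mkF_apply, if_pos hi, if_pos hi] at hcf
        have hd := (mem_Dfin.mp hl).2.2.2 i (Finset.mem_range.mpr hi)
        have hd' := (mem_Dfin.mp hl').2.2.2 i (Finset.mem_range.mpr hi)
        have hq : l i / m ^ i = l' i / m ^ i := by omega
        calc l i = m ^ i * (l i / m ^ i) := (Nat.mul_div_cancel' hd).symm
          _ = m ^ i * (l' i / m ^ i) := by rw [hq]
          _ = l' i := Nat.mul_div_cancel' hd'
      · have s1 := (mem_Dfin.mp hl).2.2.1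
        have s2 := (mem_Dfin.mp hl').2.2.1
        rw [Finsupp.notMem_support_iff.mp (fun hmem => hi (Finset.mem_range.mp (s1 hmem))),
          Finsupp.notMem_support_iff.mp (fun hmem => hi (Finset.mem_range.mp (s2 hmem)))]
    · rintro ⟨f, hw, hd⟩
      have hf0 : f ≠ 0 := by
        rintro rfl
        rw [Finsupp.sum_zero_index] at hw
        exact hN hw.symm
      have hne : f.support.Nonempty := Finsupp.support_nonempty_iff.mpr hf0
      set n := f.support.max' hne with hn
      have hnmem : n ∈ f.support := Finset.max'_mem _ _
      have hfn : f n ≠ 0 := Finsupp.mem_support_iff.mp hnmem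
      have hsupp : f.support = Finset.range (n+1) := by
        apply Finset.ext; intro j
        rw [Finset.mem_range]
        constructor
        · intro hj; have := Finset.le_max' _ _ hj; omega
        · intro hj
          rcases eq_or_lt_of_le (by omega : j ≤ n) with rfl | hlt
          · exact hnmem
          · exact Finsupp.mem_support_iff.mpr (hd n hfn j hlt)
      have hTle : (∑ i ∈ Finset.range (n+1), m ^ i) ≤ N := by
        rw [← hw, Finsupp.sum, hsupp]
        refine Finset.sum_le_sum fun i hi => ?_
        have hfi : f i ≠ 0 := Finsupp.mem_support_iff.mp (hsupp ▸ hi)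
        exact Nat.le_mul_of_pos_right _ (Nat.pos_of_ne_zero hfi)
      have hnN : n < N + 1 := by
        have h1 : m ^ n * f n ≤ N := hw ▸ term_le_wt f n hfn
        have h2 : n < m ^ n := Nat.lt_pow_self hm1
        have h3 : m ^ n ≤ m ^ n * f n := Nat.le_mul_of_pos_right _ (Nat.pos_of_ne_zero hfn)
        omega
      have hlm : mkL m n f ∈ Dfin m N n := by
        rw [mem_Dfin]
        refine ⟨hTle, ?_, Finsupp.support_onFinset_subset, ?_⟩
        · have key : ∀ i ∈ Finset.range (n+1), mkL m n f i + m ^ i = m ^ i * f i := by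
            intro i hi
            have hfi : f i ≠ 0 := Finsupp.mem_support_iff.mp (hsupp ▸ hi)
            rw [mkL_apply, if_pos (Finset.mem_range.mp hi), ← Nat.mul_succ,
              Nat.succ_eq_add_one]
            congr 1
            omega
          have hkey : (∑ i ∈ Finset.range (n+1), mkL m n f i)
              + (∑ i ∈ Finset.range (n+1), m ^ i) = N := by
            rw [← Finset.sum_add_distrib, Finset.sum_congr rfl key]
            rw [← hsupp, ← Finsupp.sum, hw]
          omega
        · intro i hi
          rw [mkL_apply, if_pos (Finset.mem_range.mp hi)]
          exact dvd_mul_right _ _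
      refine ⟨⟨⟨n, hnN⟩, ⟨mkL m n f, hlm⟩⟩, ?_⟩
      refine Subtype.ext (Finsupp.ext fun i => ?_)
      show mkF m n (mkL m n f) i = f i
      rw [mkF_apply]
      by_cases hi : i < n + 1
      · rw [if_pos hi, mkL_apply, if_pos hi,
          Nat.mul_div_cancel_left _ (pow_pos (by omega : 0 < m) i)]
        have hfi : f i ≠ 0 := Finsupp.mem_support_iff.mp
          (hsupp ▸ Finset.mem_range.mpr hi)
        omega
      · rw [if_neg hi]
        symm
        exact Finsupp.notMem_support_iff.mp
          (fun hmem => hi (Finset.mem_range.mp (hsupp ▸ hmem)))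
  calc Nat.card {f : ℕ →₀ ℕ // (f.sum fun i k => m ^ i * k) = N ∧
        ∀ i, f i ≠ 0 → ∀ j < i, f j ≠ 0}
      = Nat.card (Σ n : Fin (N+1), {l : ℕ →₀ ℕ // l ∈ Dfin m N n.1}) :=
        (Nat.card_congr (Equiv.ofBijective _ hbij)).symm
    _ = ∑ n : Fin (N+1), (Dfin m N (n:ℕ)).card := by
        rw [Nat.card_eq_fintype_card, Fintype.card_sigma]
        exact Finset.sum_congr rfl fun n _ => Fintype.card_coe _
    _ = ∑ n ∈ Finset.range (N + 1), (Dfin m N n).card := Fin.sum_univ_eq_sum_range (fun k => (Dfin m N k).card) (N+1)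

lemma card_finsupp_zero (hm : 2 ≤ m) :
    Nat.card {f : ℕ →₀ ℕ // (f.sum fun i k => m ^ i * k) = 0 ∧
        ∀ i, f i ≠ 0 → ∀ j < i, f j ≠ 0} = 1 := by
  rw [Nat.card_eq_one_iff_unique]
  constructor
  · constructor
    intro a b
    have key : ∀ x : {f : ℕ →₀ ℕ // (f.sum fun i k => m ^ i * k) = 0 ∧
        ∀ i, f i ≠ 0 → ∀ j < i, f j ≠ 0}, x.1 = 0 := by
      rintro ⟨f, hw, -⟩
      apply Finsupp.ext
      intro i
      simp only [Finsupp.coe_zero, Pi.zero_apply]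
      by_contra hfi
      have h1 := term_le_wt (m := m) f i hfi
      rw [hw] at h1
      have h2 : 0 < m ^ i := pow_pos (by omega) i
      have h3 : 0 < f i := Nat.pos_of_ne_zero hfi
      have := Nat.mul_pos h2 h3
      omega
    exact Subtype.ext ((key a).trans (key b).symm)
  · exact ⟨⟨0, by simp, fun i hi => by simp at hi⟩⟩

open PowerSeries in
/-- Coefficient-wise form of
`∑ₙ c_m(n) qⁿ = 1 + ∑_{n≥0} q^(1+m+⋯+mⁿ) / ((1-q)(1-q^m)⋯(1-q^(mⁿ)))`;
the summand indexed by `n` has order `> N` once `n > N`, so the sum over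
`n ∈ range (N+1)` captures the coefficient of `q^N` of the full series. -/
theorem stmt_10 (m : ℕ) (hm : 2 ≤ m) (N : ℕ) :
    (coeff (R := ℚ) N) (PowerSeries.mk fun n => (restrictedMaryCount m n : ℚ)) =
      (coeff (R := ℚ) N) (1 : PowerSeries ℚ) +
        ∑ n ∈ Finset.range (N + 1),
          (coeff (R := ℚ) N) ((X : PowerSeries ℚ) ^ (∑ i ∈ Finset.range (n + 1), m ^ i) *
            ∏ i ∈ Finset.range (n + 1), (1 - (X : PowerSeries ℚ) ^ (m ^ i))⁻¹) := by
  rw [coeff_mk]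
  have hsummand : ∀ n ∈ Finset.range (N+1),
      (coeff (R := ℚ) N) ((X : PowerSeries ℚ) ^ (∑ i ∈ Finset.range (n + 1), m ^ i) *
        ∏ i ∈ Finset.range (n + 1), (1 - (X : PowerSeries ℚ) ^ (m ^ i))⁻¹)
      = ((Dfin m N n).card : ℚ) := by
    intro n _
    rw [coeff_summand m hm N n, Dfin]
    split_ifs <;> simp
  rw [Finset.sum_congr rfl hsummand, card_eq_card_finsupp hm N]
  rcases eq_or_ne N 0 with rfl | hN
  · rw [card_finsupp_zero hm]
    have hD : ∀ n ∈ Finset.range 1, ((Dfin m 0 n).card : ℚ) = 0 := by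
      intro n _
      rw [Dfin, if_neg, Finset.card_empty]
      · norm_num
      · intro hT
        have : 0 < ∑ i ∈ Finset.range (n+1), m ^ i :=
          Finset.sum_pos (fun i _ => pow_pos (by omega) i) (by simp)
        omega
    rw [Finset.sum_congr rfl hD]
    simp
  · rw [card_finsupp hm N hN, PowerSeries.coeff_one, if_neg hN]
    push_cast
    ring
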